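/- Let A, N be n×n matrices with [A,N] = UŨᵀ and C ∈ ℝ^{n×r}. Then for every polynomial p of degree at most k and every w ∈ ℝ^r, N·p(A)·C·w = p(A)·N·C·w - ∑_{j=0}^{k} ∑_{ℓ=0}^{j-1} αⱼ Aˡ U (Ũᵀ A^{j-1-ℓ} C w), where p(x) = ∑_{j=0}^k αⱼ xʲ. Consequently N·K_k(A,C) ⊆ K_k(A,(NC,U)). -/

import Mathlib

open Matrix Polynomial Finset

/-- Block Krylov subspace `K_k(A,C) = span{p(A) C w : deg p ≤ k, w}`. -/
noncomputable def blockKrylov {n : ℕ} {m : Type*} [Fintype m]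
    (k : ℕ) (A : Matrix (Fin n) (Fin n) ℝ) (C : Matrix (Fin n) m ℝ) :
    Submodule ℝ (Fin n → ℝ) :=
  Submodule.span ℝ
    {v | ∃ p : Polynomial ℝ, p.natDegree ≤ k ∧ ∃ w : m → ℝ, v = (aeval A p) *ᵥ (C *ᵥ w)}

lemma sum_mulVec' {n m : ℕ} {ι : Type*} (s : Finset ι) (f : ι → Matrix (Fin n) (Fin m) ℝ)
    (w : Fin m → ℝ) : (∑ i ∈ s, f i) *ᵥ w = ∑ i ∈ s, (f i) *ᵥ w := by
  induction s using Finset.cons_induction with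
  | empty => simp
  | cons a s h ih => simp [Finset.sum_cons, Matrix.add_mulVec, ih]

lemma key_pow {n s : ℕ} (A N : Matrix (Fin n) (Fin n) ℝ) (U Ut : Matrix (Fin n) (Fin s) ℝ)
    (hcom : A * N - N * A = U * Utᵀ) (j : ℕ) :
    N * A ^ j = A ^ j * N - ∑ ℓ ∈ Finset.range j, A ^ ℓ * U * Utᵀ * A ^ (j - 1 - ℓ) := by
  have hNA : N * A = A * N - U * Utᵀ := by
    rw [sub_eq_iff_eq_add.mp hcom]; abel
  induction j with
  | zero => simp
  | succ j ih =>
    calc N * A ^ (j + 1) = (N * A ^ j) * A := by rw [pow_succ, ← mul_assoc]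
      _ = (A ^ j * N - ∑ ℓ ∈ Finset.range j, A ^ ℓ * U * Utᵀ * A ^ (j - 1 - ℓ)) * A := by
            rw [ih]
      _ = A ^ j * (N * A) - ∑ ℓ ∈ Finset.range j, A ^ ℓ * U * Utᵀ * (A ^ (j - 1 - ℓ) * A) := by
            rw [sub_mul, Finset.sum_mul, mul_assoc]
            congr 1
            refine Finset.sum_congr rfl fun ℓ hℓ => by rw [mul_assoc]
      _ = A ^ (j + 1) * N -
            (A ^ j * (U * Utᵀ) + ∑ ℓ ∈ Finset.range j, A ^ ℓ * U * Utᵀ * A ^ (j - ℓ)) := by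
            rw [hNA, mul_sub, ← mul_assoc, ← pow_succ]
            rw [show (∑ ℓ ∈ Finset.range j, A ^ ℓ * U * Utᵀ * (A ^ (j - 1 - ℓ) * A)) =
                ∑ ℓ ∈ Finset.range j, A ^ ℓ * U * Utᵀ * A ^ (j - ℓ) from
              Finset.sum_congr rfl fun ℓ hℓ => by
                rw [← pow_succ]
                congr 2
                have := Finset.mem_range.mp hℓ
                omega]
            abel
      _ = A ^ (j + 1) * N - ∑ ℓ ∈ Finset.range (j + 1), A ^ ℓ * U * Utᵀ * A ^ (j + 1 - 1 - ℓ) := by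
            rw [Finset.sum_range_succ]
            congr 1
            have h1 : j + 1 - 1 - j = 0 := by omega
            rw [h1, pow_zero, mul_one]
            rw [show (∑ ℓ ∈ Finset.range j, A ^ ℓ * U * Utᵀ * A ^ (j + 1 - 1 - ℓ)) =
                ∑ ℓ ∈ Finset.range j, A ^ ℓ * U * Utᵀ * A ^ (j - ℓ) from
              Finset.sum_congr rfl fun ℓ hℓ => by norm_num]
            rw [show A ^ j * (U * Utᵀ) = A ^ j * U * Utᵀ from (Matrix.mul_assoc _ _ _).symm, add_comm]

lemma key_poly {n s : ℕ} (A N : Matrix (Fin n) (Fin n) ℝ) (U Ut : Matrix (Fin n) (Fin s) ℝ)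
    (hcom : A * N - N * A = U * Utᵀ) (k : ℕ) (p : Polynomial ℝ) (hp : p.natDegree ≤ k) :
    N * (aeval A p) = (aeval A p) * N -
      ∑ j ∈ Finset.range (k + 1), ∑ ℓ ∈ Finset.range j,
        p.coeff j • (A ^ ℓ * U * (Utᵀ * A ^ (j - 1 - ℓ))) := by
  have hrep : (aeval A p) = ∑ j ∈ Finset.range (k + 1), p.coeff j • A ^ j :=
    Polynomial.aeval_eq_sum_range' (Nat.lt_succ_of_le hp) A
  rw [hrep, Finset.mul_sum, Finset.sum_mul]
  rw [show (∑ j ∈ Finset.range (k + 1), N * (p.coeff j • A ^ j)) =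
      ∑ j ∈ Finset.range (k + 1), (p.coeff j • (A ^ j * N) -
        ∑ ℓ ∈ Finset.range j, p.coeff j • (A ^ ℓ * U * (Utᵀ * A ^ (j - 1 - ℓ)))) from
    Finset.sum_congr rfl fun j hj => by
      rw [mul_smul_comm, key_pow A N U Ut hcom j, smul_sub, Finset.smul_sum]
      congr 1
      exact Finset.sum_congr rfl fun ℓ hℓ =>
        congrArg (fun M => p.coeff j • M) (Matrix.mul_assoc _ _ _)]
  rw [Finset.sum_sub_distrib]
  congr 1
  refine Finset.sum_congr rfl fun j hj => by rw [smul_mul_assoc]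

/-- If `[A,N] = U Ũᵀ`, then for any polynomial `p = ∑_{j=0}^k αⱼ xʲ` of degree at most `k`
and any `w ∈ ℝ^r`:
`N p(A) C w = p(A) N C w - ∑_{j=0}^k ∑_{ℓ=0}^{j-1} αⱼ A^ℓ U (Ũᵀ A^{j-1-ℓ} C w)`;
consequently `N · K_k(A,C) ⊆ K_k(A,(NC,U))`. -/
theorem mul_blockKrylov {n s r : ℕ}
    (A N : Matrix (Fin n) (Fin n) ℝ) (U Ut : Matrix (Fin n) (Fin s) ℝ)
    (hcom : A * N - N * A = U * Utᵀ)
    (C : Matrix (Fin n) (Fin r) ℝ) (k : ℕ) :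
    (∀ p : Polynomial ℝ, p.natDegree ≤ k → ∀ w : Fin r → ℝ,
        N *ᵥ ((aeval A p) *ᵥ (C *ᵥ w)) =
          (aeval A p) *ᵥ ((N * C) *ᵥ w) -
            ∑ j ∈ Finset.range (k + 1), ∑ ℓ ∈ Finset.range j,
              p.coeff j • ((A ^ ℓ * U) *ᵥ ((Utᵀ * A ^ (j - 1 - ℓ) * C) *ᵥ w))) ∧
      Submodule.map N.mulVecLin (blockKrylov k A C) ≤
        blockKrylov k A (Matrix.fromCols (N * C) U) := by
  have hmain : ∀ p : Polynomial ℝ, p.natDegree ≤ k → ∀ w : Fin r → ℝ,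
      N *ᵥ ((aeval A p) *ᵥ (C *ᵥ w)) =
        (aeval A p) *ᵥ ((N * C) *ᵥ w) -
          ∑ j ∈ Finset.range (k + 1), ∑ ℓ ∈ Finset.range j,
            p.coeff j • ((A ^ ℓ * U) *ᵥ ((Utᵀ * A ^ (j - 1 - ℓ) * C) *ᵥ w)) := by
    intro p hp w
    have h := key_poly A N U Ut hcom k p hp
    have h2 : (N * aeval A p) * C = ((aeval A p) * N -
        ∑ j ∈ Finset.range (k + 1), ∑ ℓ ∈ Finset.range j,
          p.coeff j • (A ^ ℓ * U * (Utᵀ * A ^ (j - 1 - ℓ)))) * C := by rw [h]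
    rw [Matrix.sub_mul, Matrix.sum_mul] at h2
    calc N *ᵥ ((aeval A p) *ᵥ (C *ᵥ w)) = ((N * aeval A p) * C) *ᵥ w := by
          simp [Matrix.mulVec_mulVec, Matrix.mul_assoc]
      _ = ((aeval A p * N) * C) *ᵥ w -
          (∑ j ∈ Finset.range (k + 1), (∑ ℓ ∈ Finset.range j,
            p.coeff j • (A ^ ℓ * U * (Utᵀ * A ^ (j - 1 - ℓ)))) * C) *ᵥ w := by
          rw [h2, Matrix.sub_mulVec]
      _ = (aeval A p) *ᵥ ((N * C) *ᵥ w) -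
          ∑ j ∈ Finset.range (k + 1), ∑ ℓ ∈ Finset.range j,
            p.coeff j • ((A ^ ℓ * U) *ᵥ ((Utᵀ * A ^ (j - 1 - ℓ) * C) *ᵥ w)) := by
          congr 1
          · simp [Matrix.mulVec_mulVec, Matrix.mul_assoc]
          · rw [sum_mulVec']
            refine Finset.sum_congr rfl fun j hj => by
              rw [Matrix.sum_mul, sum_mulVec']
              refine Finset.sum_congr rfl fun ℓ hℓ => by
                rw [Matrix.smul_mul, Matrix.smul_mulVec, Matrix.mulVec_mulVec]
                congr 2
                rw [Matrix.mul_assoc]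
  refine ⟨hmain, ?_⟩
  rw [blockKrylov, Submodule.map_span, Submodule.span_le]
  rintro x ⟨v, ⟨p, hp, w, rfl⟩, rfl⟩
  have hBK : ∀ q : Polynomial ℝ, q.natDegree ≤ k → ∀ u : Fin r ⊕ Fin s → ℝ,
      (aeval A q) *ᵥ ((Matrix.fromCols (N * C) U) *ᵥ u) ∈
        blockKrylov k A (Matrix.fromCols (N * C) U) :=
    fun q hq u => Submodule.subset_span ⟨q, hq, u, rfl⟩
  simp only [Matrix.mulVecLin_apply]
  rw [hmain p hp w]
  apply sub_mem
  · have := hBK p hp (Sum.elim w 0)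
    rwa [Matrix.fromCols_mulVec_sumElim, Matrix.mulVec_zero, add_zero] at this
  · apply Submodule.sum_mem
    intro j hj
    apply Submodule.sum_mem
    intro ℓ hℓ
    apply Submodule.smul_mem
    have hℓk : (X ^ ℓ : Polynomial ℝ).natDegree ≤ k := by
      rw [Polynomial.natDegree_X_pow]
      have := Finset.mem_range.mp hℓ
      have := Finset.mem_range.mp hj
      omega
    have := hBK (X ^ ℓ) hℓk (Sum.elim 0 ((Utᵀ * A ^ (j - 1 - ℓ) * C) *ᵥ w))
    rw [Matrix.fromCols_mulVec_sumElim, Matrix.mulVec_zero, zero_add] at this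
    simpa [Matrix.mulVec_mulVec, map_pow, aeval_X, Matrix.mul_assoc] using this
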